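/- Let n ≥ 2 and let a₂,…,aₙ, a_{2,2},…,a_{n,n} : ℝ → ℝ be functions with each a_{k,k} continuous and a_k(t) = t^k·a_{k,k}(t) for all t ∈ ℝ and 2 ≤ k ≤ n. Let P(t)(x) = xⁿ + a₂(t)xⁿ⁻² - a₃(t)xⁿ⁻³ + ⋯ + (-1)ⁿaₙ(t). Suppose y : ℝ → ℝ satisfies P(t)(y(t)) = 0 for all t, y(0) = 0, and y is differentiable at 0. Then y'(0) is a root of the polynomial P¹(0)(z) = zⁿ + a_{2,2}(0)zⁿ⁻² - a_{3,3}(0)zⁿ⁻³ + ⋯ + (-1)ⁿa_{n,n}(0). -/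

import Mathlib

open Polynomial Filter

/-- The monic polynomial curve `P(t)(x) = xⁿ - a₁(t)xⁿ⁻¹ + a₂(t)xⁿ⁻² - ⋯ + (-1)ⁿ aₙ(t)`. -/
noncomputable def curvePoly (n : ℕ) (a : ℕ → ℝ → ℝ) (t : ℝ) : Polynomial ℝ :=
  X ^ n + ∑ k ∈ Finset.Icc 1 n, C ((-1 : ℝ) ^ k * a k t) * X ^ (n - k)

/-- `x : T → ℝⁿ` parametrizes the roots of `P` on `T`: for each `t ∈ T` the multiset
`{x₁(t),…,xₙ(t)}` equals the multiset of roots of `P(t)` with multiplicity. -/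
def IsRootParamOn (n : ℕ) (a : ℕ → ℝ → ℝ) (T : Set ℝ) (x : Fin n → ℝ → ℝ) : Prop :=
  ∀ t ∈ T, (curvePoly n a t).roots = Multiset.map (fun i => x i t) (Finset.univ : Finset (Fin n)).val

theorem deriv_of_root_is_root_of_reduced
    (n : ℕ) (hn : 2 ≤ n) (a b : ℕ → ℝ → ℝ)
    (ha1 : ∀ t : ℝ, a 1 t = 0) (hb1 : ∀ t : ℝ, b 1 t = 0)
    (hbcont : ∀ k ∈ Finset.Icc 2 n, Continuous (b k))
    (hab : ∀ k ∈ Finset.Icc 2 n, ∀ t : ℝ, a k t = t ^ k * b k t)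
    (y : ℝ → ℝ)
    (hy : ∀ t : ℝ, (curvePoly n a t).eval (y t) = 0)
    (hy0 : y 0 = 0)
    (hydiff : DifferentiableAt ℝ y 0) :
    (curvePoly n b 0).eval (deriv y 0) = 0 := by
  set F : ℝ × ℝ → ℝ := fun p =>
    p.2 ^ n + ∑ k ∈ Finset.Icc 1 n, (-1 : ℝ) ^ k * b k p.1 * p.2 ^ (n - k) with hF
  have hFeval : ∀ t z : ℝ, (curvePoly n b t).eval z = F (t, z) := by
    intro t z
    simp [curvePoly, hF, Polynomial.eval_finset_sum]
  have hcont : Continuous F := by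
    apply Continuous.add (continuous_snd.pow n)
    apply continuous_finset_sum
    intro k hk
    obtain ⟨hk1, hk2⟩ := Finset.mem_Icc.mp hk
    have hbk : Continuous (b k) := by
      rcases eq_or_lt_of_le hk1 with h | h
      · have : b k = fun _ => 0 := by
          funext t; rw [← h]; exact hb1 t
        rw [this]; exact continuous_const
      · exact hbcont k (Finset.mem_Icc.mpr ⟨h, hk2⟩)
    exact ((continuous_const.mul (hbk.comp continuous_fst)).mul (continuous_snd.pow _))
  have hak : ∀ k ∈ Finset.Icc 1 n, ∀ t : ℝ, a k t = t ^ k * b k t := by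
    intro k hk t
    obtain ⟨hk1, hk2⟩ := Finset.mem_Icc.mp hk
    rcases eq_or_lt_of_le hk1 with h | h
    · rw [← h, ha1, hb1]; ring
    · exact hab k (Finset.mem_Icc.mpr ⟨h, hk2⟩) t
  have key : ∀ t : ℝ, t ≠ 0 → F (t, y t / t) = 0 := by
    intro t ht
    have h0 := hy t
    simp only [curvePoly, Polynomial.eval_finset_sum, eval_add, eval_pow, eval_X, eval_mul,
      eval_C] at h0
    have hmain : t ^ n * F (t, y t / t) = 0 := by
      rw [← h0, hF]
      simp only
      rw [mul_add, Finset.mul_sum]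
      congr 1
      · rw [← mul_pow, mul_div_cancel₀ _ ht]
      · apply Finset.sum_congr rfl
        intro k hk
        obtain ⟨hk1, hk2⟩ := Finset.mem_Icc.mp hk
        rw [hak k hk t, div_pow]
        have htk : t ^ (n - k) ≠ 0 := pow_ne_zero _ ht
        field_simp
        have hpow : t ^ n = t ^ k * t ^ (n - k) := by
          rw [← pow_add, Nat.add_sub_cancel' hk2]
        rw [hpow]; ring
    have htn : (t : ℝ) ^ n ≠ 0 := pow_ne_zero _ ht
    exact (mul_eq_zero.mp hmain).resolve_left htn
  have hslope : Tendsto (fun t => y t / t) (nhdsWithin 0 {(0:ℝ)}ᶜ) (nhds (deriv y 0)) := by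
    have h := hydiff.hasDerivAt
    rw [hasDerivAt_iff_tendsto_slope] at h
    refine h.congr fun t => ?_
    simp [slope_def_field, hy0, div_eq_mul_inv]
  have hpair : Tendsto (fun t : ℝ => (t, y t / t)) (nhdsWithin 0 {(0:ℝ)}ᶜ)
      (nhds ((0 : ℝ), deriv y 0)) :=
    (tendsto_id.mono_left nhdsWithin_le_nhds).prodMk_nhds hslope
  have htend : Tendsto (fun t => F (t, y t / t)) (nhdsWithin 0 {(0:ℝ)}ᶜ)
      (nhds (F (0, deriv y 0))) :=
    (hcont.continuousAt.tendsto).comp hpair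
  have hzero : Tendsto (fun t : ℝ => F (t, y t / t)) (nhdsWithin 0 {(0:ℝ)}ᶜ) (nhds 0) := by
    refine tendsto_const_nhds.congr' ?_
    filter_upwards [self_mem_nhdsWithin] with t ht
    exact (key t ht).symm
  rw [hFeval]
  exact tendsto_nhds_unique htend hzero
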